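/- For a finite simple graph Γ, the rank of the center of the right-angled Artin group A_Γ equals the number of vertices of Γ adjacent to all other vertices; equivalently, the center of A_Γ is the special subgroup generated by the vertices v with st(v) = Γ. -/

import Mathlib

open HNNExtension HNNExtension.NormalWord

private lemma toSubgroup_self {G : Type} [Group G] (A : Subgroup G) (u : ℤˣ) :
    HNNExtension.toSubgroup A A u = A := by
  rcases Int.units_eq_one_or u with rfl | rfl <;> rfl

private lemma units_eq_of_ne_neg {u v : ℤˣ} (h : u ≠ -v) : u = v := by
  rcases Int.units_eq_one_or u with rfl | rfl <;>
    rcases Int.units_eq_one_or v with rfl | rfl <;> simp_all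

theorem hnn_center_aux {G : Type} [Group G] {A : Subgroup G} (g₀ : G) (hg₀ : g₀ ∉ A)
    (z : HNNExtension G A A (MulEquiv.refl ↥A))
    (hz : ∀ x, z * x = x * z) : ∃ h ∈ A, z = HNNExtension.of h := by
  classical
  obtain ⟨d⟩ := NormalWord.TransversalPair.nonempty G A A
  set R : ReducedWord G A A := ((NormalWord.equiv (MulEquiv.refl ↥A) d) z).toReducedWord with hRdef
  have hprod : R.prod (MulEquiv.refl ↥A) = z :=
    (NormalWord.equiv (MulEquiv.refl ↥A) d).symm_apply_apply z
  have hplist : HNNExtension.of R.head *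
      (List.map (fun x : ℤˣ × G => t ^ (x.1 : ℤ) * HNNExtension.of x.2) R.toList).prod = z := by
    rw [← hprod]; rfl
  rcases List.eq_nil_or_concat R.toList with hnil | ⟨l, ⟨un, gn⟩, hconcat⟩
  · -- word has no t's : z = of R.head; use commutation with t to show R.head ∈ A
    have hz1 : z = HNNExtension.of R.head := by
      rw [← hplist, hnil]; simp
    set w₁ : ReducedWord G A A := ⟨1, [(1, R.head)], List.isChain_singleton _⟩ with hw₁
    set w₂ : ReducedWord G A A := ⟨R.head, [(1, 1)], List.isChain_singleton _⟩ with hw₂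
    have hpq : w₁.prod (MulEquiv.refl ↥A) = w₂.prod (MulEquiv.refl ↥A) := by
      simp only [hw₁, hw₂, ReducedWord.prod, List.map_cons, List.map_nil, List.prod_cons,
        List.prod_nil, map_one, one_mul, mul_one, Units.val_one, zpow_one]
      rw [← hz1, hz t]
    have key := (ReducedWord.map_fst_eq_and_of_prod_eq (MulEquiv.refl ↥A) hpq).2 1 (by simp [hw₁])
    rw [toSubgroup_self] at key
    simp only [hw₁, hw₂, inv_one, one_mul] at key
    exact ⟨R.head, key, hz1⟩
  · exfalso
    rw [List.concat_eq_append] at hconcat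
    have hL : R.toList ≠ [] := by rw [hconcat]; simp
    set u₁ : ℤˣ := (R.toList.head hL).1 with hu₁
    have hhead? : R.toList.head? = some (R.toList.head hL) := List.head?_eq_head hL
    by_cases hcan : gn ∈ A ∧ un = -u₁
    · -- pinch case : conjugating by t^{u₁} gives a longer reduced word for z
      have hchain : List.Chain' (fun a b : ℤˣ × G => a.2 ∈ toSubgroup A A a.1 → a.1 = b.1)
          ((u₁, R.head) :: (R.toList ++ [(-u₁, 1)])) := by
        unfold List.Chain'
        rw [List.isChain_cons]
        refine ⟨?_, ?_⟩
        · intro y hy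
          rw [List.head?_append_of_ne_nil _ hL, hhead?] at hy
          cases hy
          exact fun _ => rfl
        · rw [List.isChain_append]
          refine ⟨R.chain, List.isChain_singleton _, ?_⟩
          intro x hx y hy
          rw [hconcat, List.getLast?_concat] at hx
          cases hx
          cases hy
          exact fun _ => hcan.2
      set W : ReducedWord G A A := ⟨1, (u₁, R.head) :: (R.toList ++ [(-u₁, 1)]), hchain⟩ with hW
      have hWprod : W.prod (MulEquiv.refl ↥A) = R.prod (MulEquiv.refl ↥A) := by
        simp only [hW, ReducedWord.prod, List.map_cons, List.prod_cons, List.map_append,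
          List.prod_append, List.map_nil, List.prod_nil, map_one, one_mul, mul_one]
        simp only [← mul_assoc]
        rw [mul_assoc (t ^ (u₁ : ℤ)) (HNNExtension.of R.head), hplist, ← hz, mul_assoc,
          Units.val_neg, ← zpow_add, add_neg_cancel, zpow_zero, mul_one]
      have hlen := congrArg List.length
        ((ReducedWord.map_fst_eq_and_of_prod_eq (MulEquiv.refl ↥A) hWprod).1)
      rw [hW] at hlen
      simp only [List.map_cons, List.map_append, List.length_cons, List.length_append,
        List.length_map, List.length_cons, List.map_nil, List.length_nil] at hlen
      omega
    · -- no pinch : compare t^{u₁} z = z t^{u₁} to get R.head ∈ A, then g₀ comparison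
      have hchain₁ : List.Chain' (fun a b : ℤˣ × G => a.2 ∈ toSubgroup A A a.1 → a.1 = b.1)
          ((u₁, R.head) :: R.toList) := by
        unfold List.Chain'
        rw [List.isChain_cons]
        refine ⟨fun y hy => ?_, R.chain⟩
        rw [hhead?] at hy
        cases hy
        exact fun _ => rfl
      have hchain₂ : List.Chain' (fun a b : ℤˣ × G => a.2 ∈ toSubgroup A A a.1 → a.1 = b.1)
          (R.toList ++ [(u₁, 1)]) := by
        unfold List.Chain'
        rw [List.isChain_append]
        refine ⟨R.chain, List.isChain_singleton _, ?_⟩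
        intro x hx y hy
        rw [hconcat, List.getLast?_concat] at hx
        cases hx
        cases hy
        intro hgn
        rw [toSubgroup_self] at hgn
        exact units_eq_of_ne_neg (fun h => hcan ⟨hgn, h⟩)
      set W₁ : ReducedWord G A A := ⟨1, (u₁, R.head) :: R.toList, hchain₁⟩ with hW₁
      set W₂ : ReducedWord G A A := ⟨R.head, R.toList ++ [(u₁, 1)], hchain₂⟩ with hW₂
      have hprod12 : W₁.prod (MulEquiv.refl ↥A) = W₂.prod (MulEquiv.refl ↥A) := by
        simp only [hW₁, hW₂, ReducedWord.prod, List.map_cons, List.prod_cons, List.map_append,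
          List.prod_append, List.map_nil, List.prod_nil, map_one, one_mul, mul_one]
        simp only [← mul_assoc]
        rw [mul_assoc (t ^ (u₁ : ℤ)) (HNNExtension.of R.head), hplist, ← hz]
      have keyh := (ReducedWord.map_fst_eq_and_of_prod_eq (MulEquiv.refl ↥A) hprod12).2 u₁
        (by simp [hW₁])
      rw [toSubgroup_self] at keyh
      simp only [hW₁, hW₂, inv_one, one_mul] at keyh
      -- keyh : R.head ∈ A
      have hchain₄ : List.Chain' (fun a b : ℤˣ × G => a.2 ∈ toSubgroup A A a.1 → a.1 = b.1)
          (l ++ [(un, gn * g₀)]) := by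
        have := R.chain
        rw [hconcat, List.isChain_append] at this
        unfold List.Chain'
        rw [List.isChain_append]
        exact ⟨this.1, List.isChain_singleton _, fun x hx y hy => by
          cases hy
          exact this.2.2 x hx (un, gn) rfl⟩
      set W₃ : ReducedWord G A A := ⟨g₀ * R.head, R.toList, R.chain⟩ with hW₃
      set W₄ : ReducedWord G A A := ⟨R.head, l ++ [(un, gn * g₀)], hchain₄⟩ with hW₄
      have hprod34 : W₃.prod (MulEquiv.refl ↥A) = W₄.prod (MulEquiv.refl ↥A) := by
        simp only [hW₃, hW₄, ReducedWord.prod, List.map_cons, List.prod_cons, List.map_append,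
          List.prod_append, List.map_nil, List.prod_nil, map_one, one_mul, mul_one, map_mul]
        rw [mul_assoc (HNNExtension.of g₀), hplist, ← hz, ← hplist, hconcat]
        simp only [List.map_append, List.prod_append, List.map_cons, List.prod_cons,
          List.map_nil, List.prod_nil, mul_one]
        simp only [mul_assoc]
      have keyg := (ReducedWord.map_fst_eq_and_of_prod_eq (MulEquiv.refl ↥A) hprod34).2 u₁
        (by simp [hW₃, hhead?, hu₁])
      rw [toSubgroup_self] at keyg
      simp only [hW₃, hW₄, mul_inv_rev] at keyg
      -- keyg : (g₀ * R.head)⁻¹ * R.head ∈ A i.e. R.head⁻¹ * g₀⁻¹ * R.head ∈ A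
      apply hg₀
      have : R.head * (R.head⁻¹ * g₀⁻¹ * R.head) * R.head⁻¹ ∈ A :=
        A.mul_mem (A.mul_mem keyh keyg) (A.inv_mem keyh)
      simpa [mul_assoc] using A.inv_mem this


/-- The defining relations of a right-angled Artin group: commutators of adjacent vertices. -/
def raagRels {V : Type} (Γ : SimpleGraph V) : Set (FreeGroup V) :=
  {r | ∃ u w : V, Γ.Adj u w ∧
    r = FreeGroup.of u * FreeGroup.of w * (FreeGroup.of u)⁻¹ * (FreeGroup.of w)⁻¹}

/-- The right-angled Artin group on the graph `Γ`. -/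
abbrev RAAG {V : Type} (Γ : SimpleGraph V) : Type := PresentedGroup (raagRels Γ)

namespace RAAGAux

variable {V : Type} (Γ : SimpleGraph V)

/-- Lift a vertex map with commuting images to a homomorphism on the RAAG. -/
def raagLift {G : Type*} [Group G] (f : V → G)
    (hf : ∀ u w, Γ.Adj u w → Commute (f u) (f w)) : RAAG Γ →* G :=
  PresentedGroup.toGroup (f := f) (by
    rintro r ⟨u, w, hadj, rfl⟩
    simp only [map_mul, map_inv, FreeGroup.lift_apply_of]
    have h := (hf u w hadj).eq
    rw [h]
    group)

@[simp] lemma raagLift_of {G : Type*} [Group G] (f : V → G)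
    (hf : ∀ u w, Γ.Adj u w → Commute (f u) (f w)) (v : V) :
    raagLift Γ f hf (PresentedGroup.of v) = f v :=
  PresentedGroup.toGroup.of _

lemma raag_commute {u w : V} (h : Γ.Adj u w) :
    Commute (PresentedGroup.of u : RAAG Γ) (PresentedGroup.of w) := by
  have h1 : (PresentedGroup.mk (raagRels Γ))
      (FreeGroup.of u * FreeGroup.of w * (FreeGroup.of u)⁻¹ * (FreeGroup.of w)⁻¹) = 1 := by
    apply (QuotientGroup.eq_one_iff _).2
    exact Subgroup.subset_normalClosure ⟨u, w, h, rfl⟩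
  simp only [map_mul, map_inv] at h1
  rw [← commutatorElement_eq_one_iff_commute]
  exact h1

/-- The retraction-type endomorphism of a RAAG killing the generators outside `T`. -/
def eT (T : Set V) [DecidablePred (· ∈ T)] : RAAG Γ →* RAAG Γ :=
  raagLift Γ (fun v => if v ∈ T then PresentedGroup.of v else 1) (by
    intro u w h
    by_cases hu : u ∈ T <;> by_cases hw : w ∈ T <;>
      simp [hu, hw, raag_commute Γ h, Commute.one_left, Commute.one_right])

lemma eT_fix {T : Set V} [DecidablePred (· ∈ T)] {g : RAAG Γ}
    (hg : g ∈ Subgroup.closure ((PresentedGroup.of : V → RAAG Γ) '' T)) : eT Γ T g = g := by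
  induction hg using Subgroup.closure_induction with
  | mem x hx =>
    obtain ⟨v, hv, rfl⟩ := hx
    simp [eT, hv]
  | one => simp
  | mul x y _ _ hx hy => simp [map_mul, hx, hy]
  | inv x _ hx => simp [map_inv, hx]

lemma eT_mem {T : Set V} [DecidablePred (· ∈ T)] (g : RAAG Γ) :
    eT Γ T g ∈ Subgroup.closure ((PresentedGroup.of : V → RAAG Γ) '' T) := by
  refine PresentedGroup.generated_by _
    ((Subgroup.closure ((PresentedGroup.of : V → RAAG Γ) '' T)).comap (eT Γ T)) ?_ g
  intro v
  simp only [Subgroup.mem_comap, eT, raagLift_of]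
  by_cases hv : v ∈ T
  · simp only [if_pos hv]
    exact Subgroup.subset_closure ⟨v, hv, rfl⟩
  · simp only [if_neg hv]
    exact Subgroup.one_mem _

lemma eT_comp (T₁ T₂ : Set V) [DecidablePred (· ∈ T₁)] [DecidablePred (· ∈ T₂)]
    [DecidablePred (· ∈ T₁ ∩ T₂)] :
    (eT Γ T₂).comp (eT Γ T₁) = eT Γ (T₁ ∩ T₂) := by
  apply PresentedGroup.ext
  intro v
  simp only [MonoidHom.comp_apply, eT, raagLift_of]
  by_cases h1 : v ∈ T₁ <;> by_cases h2 : v ∈ T₂ <;>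
    simp [h1, h2, Set.mem_inter_iff]

lemma mem_closure_inter {T₁ T₂ : Set V} {g : RAAG Γ}
    (h1 : g ∈ Subgroup.closure ((PresentedGroup.of : V → RAAG Γ) '' T₁))
    (h2 : g ∈ Subgroup.closure ((PresentedGroup.of : V → RAAG Γ) '' T₂)) :
    g ∈ Subgroup.closure ((PresentedGroup.of : V → RAAG Γ) '' (T₁ ∩ T₂)) := by
  classical
  have key : eT Γ (T₁ ∩ T₂) g = g := by
    have e1 : eT Γ T₁ g = g := eT_fix Γ h1
    have e2 : eT Γ T₂ g = g := eT_fix Γ h2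
    have := congrArg (fun φ : RAAG Γ →* RAAG Γ => φ g) (eT_comp Γ T₁ T₂)
    simpa [e1, e2] using this.symm
  rw [← key]
  exact eT_mem Γ g

end RAAGAux

namespace RAAGAux

variable {V : Type} (Γ : SimpleGraph V)

lemma central_mem_star [DecidableEq V] (g : RAAG Γ) (hg : g ∈ Subgroup.center (RAAG Γ))
    (w : V) :
    g ∈ Subgroup.closure ((PresentedGroup.of : V → RAAG Γ) '' {v | v = w ∨ Γ.Adj w v}) := by
  classical
  by_cases hyp : ∀ x, x ≠ w → Γ.Adj w x
  · have huniv : {v | v = w ∨ Γ.Adj w v} = Set.univ := by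
      ext v
      simp only [Set.mem_setOf_eq, Set.mem_univ, iff_true]
      by_cases hv : v = w
      · exact Or.inl hv
      · exact Or.inr (hyp v hv)
    rw [huniv, Set.image_univ, PresentedGroup.closure_range_of]
    trivial
  · push_neg at hyp
    obtain ⟨u₀, hu₀ne, hu₀na⟩ := hyp
    -- the vertex set without w
    set s : Set V := {v | v ≠ w} with hs
    set G' : Type := RAAG (Γ.induce s) with hG'
    -- the "link" subgroup of G'
    set A : Subgroup G' :=
      Subgroup.closure ((PresentedGroup.of : ↥s → G') '' {x : ↥s | Γ.Adj w ↑x}) with hA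
    -- inclusion G' → RAAG Γ
    set f : G' →* RAAG Γ := raagLift (Γ.induce s) (fun x => PresentedGroup.of ↑x)
      (fun a b hab => raag_commute Γ hab) with hf
    have hfof : ∀ y : ↥s, f (PresentedGroup.of y) = PresentedGroup.of (y : V) := fun y =>
      raagLift_of _ _ _ y
    -- of w commutes with f(A)
    have hcommA : ∀ a : G', a ∈ A → Commute (PresentedGroup.of w : RAAG Γ) (f a) := by
      intro a ha
      induction ha using Subgroup.closure_induction with
      | mem x hx =>
        obtain ⟨y, hy, rfl⟩ := hx
        rw [hfof]
        exact raag_commute Γ hy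
      | one => simp
      | mul x y _ _ hx hy => rw [map_mul]; exact hx.mul_right hy
      | inv x _ hx => rw [map_inv]; exact hx.inv_right
    -- the two homomorphisms
    set Ψ : HNNExtension G' A A (MulEquiv.refl ↥A) →* RAAG Γ :=
      HNNExtension.lift f (PresentedGroup.of w)
        (fun a => (hcommA a a.2).eq) with hΨ
    have hFcomm : ∀ u v, Γ.Adj u v →
        Commute (if h : u = w then HNNExtension.t (φ := MulEquiv.refl ↥A)
            else HNNExtension.of (PresentedGroup.of (⟨u, h⟩ : ↥s)))
          (if h : v = w then HNNExtension.t
            else HNNExtension.of (PresentedGroup.of (⟨v, h⟩ : ↥s))) := by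
      intro u v huv
      have tcomm : ∀ x : V, Γ.Adj w x → ∀ (hx : x ≠ w),
          Commute (HNNExtension.t (φ := MulEquiv.refl ↥A))
            (HNNExtension.of (PresentedGroup.of (⟨x, hx⟩ : ↥s))) := by
        intro x hx hxw
        have hmem : PresentedGroup.of (⟨x, hxw⟩ : ↥s) ∈ A :=
          Subgroup.subset_closure ⟨⟨x, hxw⟩, hx, rfl⟩
        exact HNNExtension.t_mul_of (φ := MulEquiv.refl ↥A)
          (⟨PresentedGroup.of (⟨x, hxw⟩ : ↥s), hmem⟩ : ↥A)
      by_cases hu : u = w <;> by_cases hv : v = w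
      · exact absurd ((hu.trans hv.symm) ▸ huv) (Γ.loopless.irrefl _)
      · subst hu
        rw [dif_pos rfl, dif_neg hv]
        exact tcomm v huv hv
      · subst hv
        rw [dif_neg hu, dif_pos rfl]
        exact (tcomm u huv.symm hu).symm
      · rw [dif_neg hu, dif_neg hv]
        exact ((raag_commute (Γ.induce s)
          (by exact huv : (Γ.induce s).Adj ⟨u, hu⟩ ⟨v, hv⟩))).map HNNExtension.of
    set Φ : RAAG Γ →* HNNExtension G' A A (MulEquiv.refl ↥A) :=
      raagLift Γ (fun v => if h : v = w then HNNExtension.t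
        else HNNExtension.of (PresentedGroup.of (⟨v, h⟩ : ↥s))) hFcomm with hΦ
    have hΦof : ∀ x : V, ∀ h : x ≠ w,
        Φ (PresentedGroup.of x) = HNNExtension.of (PresentedGroup.of (⟨x, h⟩ : ↥s)) := by
      intro x h
      rw [hΦ, raagLift_of, dif_neg h]
    have hΦw : Φ (PresentedGroup.of w) = HNNExtension.t := by
      rw [hΦ, raagLift_of, dif_pos rfl]
    -- Ψ ∘ Φ = id
    have hΨΦ : ∀ x, Ψ (Φ x) = x := by
      have : Ψ.comp Φ = MonoidHom.id (RAAG Γ) := by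
        apply PresentedGroup.ext
        intro x
        by_cases hx : x = w
        · subst hx
          rw [MonoidHom.comp_apply, hΦw, MonoidHom.id_apply, hΨ]
          exact HNNExtension.lift_t _ _ _
        · rw [MonoidHom.comp_apply, hΦof x hx, MonoidHom.id_apply, hΨ]
          exact (HNNExtension.lift_of _ _ _ _).trans (hfof _)
      intro x
      calc Ψ (Φ x) = Ψ.comp Φ x := rfl
        _ = x := by rw [this, MonoidHom.id_apply]
    -- of = Φ ∘ f
    have hofΦ : ∀ x : G', HNNExtension.of (φ := MulEquiv.refl ↥A) x = Φ (f x) := by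
      have : Φ.comp f = HNNExtension.of (φ := MulEquiv.refl ↥A) := by
        apply PresentedGroup.ext
        intro y
        rw [MonoidHom.comp_apply, hfof, hΦof (y : V) y.2]
      intro x
      rw [← this, MonoidHom.comp_apply]
    -- Φ g is central
    have hcent : ∀ x, Φ g * x = x * Φ g := by
      have key : ∀ x, Commute (Φ g) x := by
        intro x
        induction x using HNNExtension.induction_on with
        | of g' =>
          rw [hofΦ g']
          exact (show Commute g (f g') from (Subgroup.mem_center_iff.1 hg (f g')).symm).map Φ
        | t =>
          rw [← hΦw]
          exact (show Commute g (PresentedGroup.of w) from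
            (Subgroup.mem_center_iff.1 hg _).symm).map Φ
        | mul x y hx hy => exact hx.mul_right hy
        | inv x hx => exact hx.inv_right
      exact fun x => (key x).eq
    -- apply the HNN center lemma
    have hg₀ : (PresentedGroup.of (⟨u₀, hu₀ne⟩ : ↥s) : G') ∉ A := by
      intro hmem
      set χ : G' →* Multiplicative ℤ := raagLift (Γ.induce s)
        (fun y => Multiplicative.ofAdd (if (y : V) = u₀ then (1 : ℤ) else 0))
        (fun _ _ _ => Commute.all _ _) with hχ
      have h1 : χ (PresentedGroup.of (⟨u₀, hu₀ne⟩ : ↥s)) = Multiplicative.ofAdd (1 : ℤ) := by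
        rw [hχ, raagLift_of, if_pos rfl]
      have h2 : A ≤ χ.ker := by
        rw [hA]
        apply (Subgroup.closure_le _).2
        rintro _ ⟨y, hy, rfl⟩
        have hyne : (y : V) ≠ u₀ := fun h => hu₀na (h ▸ hy)
        have : χ (PresentedGroup.of y) = 1 := by
          rw [hχ, raagLift_of, if_neg hyne]
          rfl
        exact MonoidHom.mem_ker.2 this
      have := h2 hmem
      rw [MonoidHom.mem_ker, h1] at this
      exact absurd this (by decide)
    obtain ⟨h, hhA, hΦg⟩ := hnn_center_aux _ hg₀ (Φ g) hcent
    -- conclude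
    have hgf : g = f h := by
      rw [← hΨΦ g, hΦg, hΨ]
      exact HNNExtension.lift_of _ _ _ _
    rw [hgf]
    have hmap : f h ∈ A.map f := Subgroup.mem_map.2 ⟨h, hhA, rfl⟩
    rw [hA, MonoidHom.map_closure] at hmap
    refine Subgroup.closure_mono ?_ hmap
    rintro _ ⟨_, ⟨y, hy, rfl⟩, rfl⟩
    exact ⟨(y : V), Or.inr hy, (hfof y).symm⟩

lemma center_eq [Fintype V] [DecidableEq V] :
    Subgroup.center (RAAG Γ) =
      Subgroup.closure ((fun v : V => (PresentedGroup.of v : RAAG Γ)) ''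
        {v : V | ∀ w : V, w ≠ v → Γ.Adj v w}) := by
  classical
  apply le_antisymm
  · intro g hg
    have key : ∀ F : Finset V, g ∈ Subgroup.closure
        ((PresentedGroup.of : V → RAAG Γ) '' {v | ∀ w ∈ F, v = w ∨ Γ.Adj w v}) := by
      intro F
      induction F using Finset.induction with
      | empty =>
        have h0 : {v : V | ∀ w ∈ (∅ : Finset V), v = w ∨ Γ.Adj w v} = Set.univ := by simp
        rw [h0, Set.image_univ, PresentedGroup.closure_range_of]
        trivial
      | @insert a F ha ih =>
        have hset : {v : V | ∀ x ∈ insert a F, v = x ∨ Γ.Adj x v} =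
            {v : V | v = a ∨ Γ.Adj a v} ∩ {v : V | ∀ x ∈ F, v = x ∨ Γ.Adj x v} := by
          ext v
          simp only [Set.mem_setOf_eq, Set.mem_inter_iff, Finset.forall_mem_insert]
        rw [hset]
        exact mem_closure_inter Γ (central_mem_star Γ g hg a) ih
    have hall := key Finset.univ
    have hset : {v : V | ∀ w ∈ (Finset.univ : Finset V), v = w ∨ Γ.Adj w v}
        = {v : V | ∀ w : V, w ≠ v → Γ.Adj v w} := by
      ext v
      simp only [Set.mem_setOf_eq, Finset.mem_univ, true_implies, forall_const]
      constructor
      · intro h w hw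
        rcases h w with h' | h'
        · exact absurd h'.symm hw
        · exact h'.symm
      · intro h w
        by_cases hvw : v = w
        · exact Or.inl hvw
        · exact Or.inr ((h w (Ne.symm hvw)).symm)
    rwa [hset] at hall
  · rw [Subgroup.closure_le]
    rintro _ ⟨v, hv, rfl⟩
    rw [SetLike.mem_coe, Subgroup.mem_center_iff]
    intro x
    have hcomm : x ∈ Subgroup.centralizer {(PresentedGroup.of v : RAAG Γ)} := by
      refine PresentedGroup.generated_by _ (Subgroup.centralizer {PresentedGroup.of v}) ?_ x
      intro j
      rw [Subgroup.mem_centralizer_iff]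
      intro y hy
      rw [Set.mem_singleton_iff] at hy
      subst hy
      by_cases hj : j = v
      · subst hj; rfl
      · exact (raag_commute Γ (hv j hj)).eq
    have := Subgroup.mem_centralizer_iff.1 hcomm (PresentedGroup.of v) rfl
    exact this.symm

abbrev SV := {v : V // ∀ w : V, w ≠ v → Γ.Adj v w}

lemma center_iso [Fintype V] [DecidableEq V] [DecidableRel Γ.Adj] :
    Nonempty ((Subgroup.center (RAAG Γ)) ≃*
      Multiplicative (Fin (Fintype.card (SV Γ)) → ℤ)) := by
  classical
  have hcomm : Pairwise fun (s t : SV Γ) => ∀ (x y : Multiplicative ℤ),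
      Commute ((zpowersHom (RAAG Γ) (PresentedGroup.of s.val)) x)
        ((zpowersHom (RAAG Γ) (PresentedGroup.of t.val)) y) := by
    intro s t hst x y
    simp only [zpowersHom_apply]
    have hne : t.val ≠ s.val := fun h => hst (Subtype.ext h.symm)
    exact ((raag_commute Γ (s.2 t.val hne))).zpow_zpow _ _
  set j : (∀ _ : SV Γ, Multiplicative ℤ) →* RAAG Γ :=
    MonoidHom.noncommPiCoprod
      (fun s : SV Γ => zpowersHom (RAAG Γ) (PresentedGroup.of s.val)) hcomm with hj
  set π : RAAG Γ →* Multiplicative (SV Γ → ℤ) :=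
    raagLift Γ (fun v => if h : ∀ w : V, w ≠ v → Γ.Adj v w
      then Multiplicative.ofAdd (Pi.single (⟨v, h⟩ : SV Γ) (1 : ℤ)) else 1)
      (fun _ _ _ => Commute.all _ _) with hπ
  have hπof : ∀ s : SV Γ,
      π (PresentedGroup.of s.val) = Multiplicative.ofAdd (Pi.single s (1 : ℤ)) := by
    intro s
    rw [hπ, raagLift_of, dif_pos s.2]
  have hπj : ∀ m, π (j m) = Multiplicative.ofAdd (fun s => Multiplicative.toAdd (m s)) := by
    intro m
    have happ : j m = Finset.univ.noncommProd
        (fun i : SV Γ => zpowersHom (RAAG Γ) (PresentedGroup.of i.val) (m i))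
        (fun _ _ _ _ h => hcomm h _ _) := rfl
    rw [happ]
    erw [Finset.map_noncommProd, Finset.noncommProd_eq_prod]
    have hterm : ∀ i : SV Γ, π (zpowersHom (RAAG Γ) (PresentedGroup.of i.val) (m i))
        = Multiplicative.ofAdd (Pi.single i (Multiplicative.toAdd (m i))) := by
      intro i
      rw [zpowersHom_apply, map_zpow, hπof]
      have hpow : (Multiplicative.ofAdd (Pi.single i (1 : ℤ)) : Multiplicative (SV Γ → ℤ))
          ^ Multiplicative.toAdd (m i)
          = Multiplicative.ofAdd (Multiplicative.toAdd (m i) • Pi.single i (1 : ℤ)) := rfl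
      rw [hpow, ← Pi.single_smul, smul_eq_mul, mul_one]
    simp_rw [hterm]
    rw [← ofAdd_sum]
    congr 1
    exact Finset.univ_sum_single _
  have hjinj : Function.Injective j := by
    intro a b hab
    have h1 := hπj a
    rw [hab, hπj b] at h1
    funext s
    have := congrFun (Multiplicative.ofAdd.injective h1) s
    exact Multiplicative.toAdd.injective this.symm
  have hrange : j.range = Subgroup.closure
      ((fun v : V => (PresentedGroup.of v : RAAG Γ)) ''
        {v : V | ∀ w : V, w ≠ v → Γ.Adj v w}) := by
    rw [hj, MonoidHom.noncommPiCoprod_range]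
    have h1 : ∀ s : SV Γ, (zpowersHom (RAAG Γ) (PresentedGroup.of s.val)).range
        = Subgroup.closure {(PresentedGroup.of s.val : RAAG Γ)} := by
      intro s
      rw [← Subgroup.zpowers_eq_closure]
      ext x
      simp [MonoidHom.mem_range, Subgroup.mem_zpowers_iff, zpowersHom_apply]
    simp_rw [h1]
    rw [← Subgroup.closure_iUnion]
    congr 1
    ext x
    simp only [Set.mem_iUnion, Set.mem_singleton_iff, Set.mem_image, Set.mem_setOf_eq]
    constructor
    · rintro ⟨s, rfl⟩
      exact ⟨s.val, s.2, rfl⟩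
    · rintro ⟨v, hv, rfl⟩
      exact ⟨⟨v, hv⟩, rfl⟩
  let e : SV Γ ≃ Fin (Fintype.card (SV Γ)) := Fintype.equivFin (SV Γ)
  let e₁ : Multiplicative (Fin (Fintype.card (SV Γ)) → ℤ) ≃* Multiplicative (SV Γ → ℤ) :=
    AddEquiv.toMultiplicative (AddEquiv.arrowCongr e.symm (AddEquiv.refl ℤ))
  let e₂ : Multiplicative (SV Γ → ℤ) ≃* (∀ _ : SV Γ, Multiplicative ℤ) :=
    MulEquiv.piMultiplicative _
  let e₃ : (∀ _ : SV Γ, Multiplicative ℤ) ≃* j.range := MonoidHom.ofInjective hjinj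
  let e₄ : (j.range : Subgroup (RAAG Γ)) ≃* Subgroup.center (RAAG Γ) :=
    MulEquiv.subgroupCongr (hrange.trans (center_eq Γ).symm)
  exact ⟨((e₄.symm.trans e₃.symm).trans e₂.symm).trans e₁.symm⟩

end RAAGAux

/-- The center of the RAAG `A_Γ` on a finite simple graph is the special subgroup
generated by the vertices adjacent to all other vertices, and it is free abelian of
rank `z(Γ)`, the number of such vertices. -/
theorem stmt4 {V : Type} [Fintype V] [DecidableEq V] (Γ : SimpleGraph V)
    [DecidableRel Γ.Adj] :
    Subgroup.center (RAAG Γ) =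
      Subgroup.closure
        ((fun v : V => (PresentedGroup.of v : RAAG Γ)) ''
          {v : V | ∀ w : V, w ≠ v → Γ.Adj v w}) ∧
    Nonempty ((Subgroup.center (RAAG Γ)) ≃*
      Multiplicative (Fin (Fintype.card {v : V // ∀ w : V, w ≠ v → Γ.Adj v w}) → ℤ)) := by
  exact ⟨RAAGAux.center_eq Γ, RAAGAux.center_iso Γ⟩
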